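/- Let (C, A) be output-stable. The kernel of the noncommutative observability gramian G equals the intersection over all words v in F_d of the kernels of C A^v, this subspace is invariant under each A_j, and it is contained in the kernel of the abelianized gramian G^a. Moreover, the kernel of G^a is invariant under each A_j if and only if ker G^a = ker G. -/

import Mathlib

open ContinuousLinearMap

noncomputable section

variable {X Y : Type*}
  [NormedAddCommGroup X] [InnerProductSpace ℂ X] [CompleteSpace X]
  [NormedAddCommGroup Y] [InnerProductSpace ℂ Y] [CompleteSpace Y]

/-- `A^v`: for a word `v = i_N … i_1` (stored as the list `[i_N, …, i_1]`), the
product `A_{i_N} ∘ A_{i_{N-1}} ∘ ⋯ ∘ A_{i_1}`. -/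
def wordProd {d : ℕ} (A : Fin d → X →L[ℂ] X) (v : List (Fin d)) : X →L[ℂ] X :=
  (v.map A).prod

/-- `A^w` for a word of length `N` encoded as a function `w : Fin N → Fin d`. -/
def funProd {d N : ℕ} (A : Fin d → X →L[ℂ] X) (w : Fin N → Fin d) : X →L[ℂ] X :=
  wordProd A (List.ofFn w)

/-- The weight `n!/|n|!` attached to a multi-index `n`. -/
def wt {d : ℕ} (n : Fin d → ℕ) : ℝ :=
  ((∏ i, Nat.factorial (n i) : ℕ) : ℝ) / ((Nat.factorial (∑ i, n i) : ℕ) : ℝ)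

/-- The finite set of words of length `|n|` (encoded as functions `Fin |n| → Fin d`)
whose abelianization is the multi-index `n`. -/
def abWords {d : ℕ} (n : Fin d → ℕ) : Finset (Fin (∑ i, n i) → Fin d) :=
  Finset.univ.filter fun w => ∀ i, (List.ofFn w).count i = n i

section Aux

set_option linter.unusedSectionVars false

lemma wordProd_nil' {d : ℕ} (A : Fin d → X →L[ℂ] X) : wordProd A [] = 1 := by
  simp [wordProd]

lemma wordProd_cons' {d : ℕ} (A : Fin d → X →L[ℂ] X) (j : Fin d) (v : List (Fin d)) (x : X) :
    wordProd A (j :: v) x = A j (wordProd A v x) := by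
  simp [wordProd, List.prod_cons, mul_apply]

lemma wordProd_concat' {d : ℕ} (A : Fin d → X →L[ℂ] X) (j : Fin d) (v : List (Fin d)) (x : X) :
    wordProd A (v ++ [j]) x = wordProd A v (A j x) := by
  simp [wordProd, List.prod_append, mul_apply]

lemma wt_pos' {d : ℕ} (n : Fin d → ℕ) : 0 < wt n := by
  apply div_pos <;> · norm_cast; positivity

lemma abWords_zero_sum' {d : ℕ} (A : Fin d → X →L[ℂ] X) (C : X →L[ℂ] Y) (y : X) :
    ∑ v ∈ abWords (fun _ : Fin d => 0), C (funProd A v y) = C y := by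
  have hz : (∑ i : Fin d, (0:ℕ)) = 0 := Finset.sum_const_zero
  have hval : ∀ w : Fin (∑ i : Fin d, (0:ℕ)) → Fin d, C (funProd A w y) = C y := by
    intro w
    have : List.ofFn w = [] := by
      apply List.eq_nil_of_length_eq_zero
      simp [hz]
    simp [funProd, this, wordProd]
  have huniv : abWords (fun _ : Fin d => 0) = Finset.univ := by
    ext w
    have : List.ofFn w = [] := by
      apply List.eq_nil_of_length_eq_zero
      simp [hz]
    simp [abWords, this]
  haveI : IsEmpty (Fin (∑ i : Fin d, (0:ℕ))) := by rw [hz]; infer_instance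
  rw [huniv, Finset.sum_congr rfl fun w _ => hval w, Finset.sum_const]
  have hcard : Fintype.card (Fin (∑ i : Fin d, (0:ℕ)) → Fin d) = 1 := by
    simp [Fintype.card_fun]
  simp [Finset.card_univ, hcard]

end Aux

/-- Kernels of the gramians: ker G is the joint kernel of the C A^v and is
A_j-invariant; ker G ⊆ ker G^a; and ker G^a is A_j-invariant iff ker G^a = ker G. -/
theorem stmt12 {d : ℕ} (A : Fin d → X →L[ℂ] X) (C : X →L[ℂ] Y) (G Ga : X →L[ℂ] X)
    (hstable : ∀ x : X, Summable fun v : List (Fin d) => ‖C (wordProd A v x)‖ ^ 2)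
    (hG : ∀ x : X, HasSum
      (fun v : List (Fin d) => adjoint (wordProd A v) ((adjoint C) (C (wordProd A v x))))
      (G x))
    (hGa : ∀ x : X, HasSum (fun n : Fin d → ℕ =>
      wt n • ∑ v ∈ abWords n, ∑ u ∈ abWords n,
        adjoint (funProd A v) ((adjoint C) (C (funProd A u x)))) (Ga x)) :
    (∀ x : X, G x = 0 ↔ ∀ v : List (Fin d), C (wordProd A v x) = 0) ∧
    (∀ x : X, G x = 0 → ∀ j, G (A j x) = 0) ∧
    (∀ x : X, G x = 0 → Ga x = 0) ∧
    ((∀ j, ∀ x : X, Ga x = 0 → Ga (A j x) = 0) ↔ (∀ x : X, Ga x = 0 ↔ G x = 0)) := by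
  clear hstable
  -- sum-of-norms formula for G
  have hGnorm : ∀ x : X, HasSum (fun v : List (Fin d) => ‖C (wordProd A v x)‖ ^ 2)
      (Complex.re (inner ℂ x (G x))) := by
    intro x
    have h1 := ((hG x).mapL (innerSL ℂ x)).mapL Complex.reCLM
    convert h1 using 2 with v
    simp only [innerSL_apply_apply, Complex.reCLM_apply, adjoint_inner_right]
    exact (inner_self_eq_norm_sq (𝕜 := ℂ) _).symm
    simp only [innerSL_apply_apply, Complex.reCLM_apply]
  -- sum-of-norms formula for Ga
  have hGanorm : ∀ x : X, HasSum
      (fun n : Fin d → ℕ => wt n * ‖∑ v ∈ abWords n, C (funProd A v x)‖ ^ 2)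
      (Complex.re (inner ℂ x (Ga x))) := by
    intro x
    have h1 := ((hGa x).mapL (innerSL ℂ x)).mapL Complex.reCLM
    convert h1 using 2 with n
    simp only [innerSL_apply_apply, Complex.reCLM_apply]
    rw [← algebraMap_smul ℂ (wt n), inner_smul_right]
    simp only [Complex.coe_algebraMap, Complex.re_ofReal_mul]
    congr 1
    rw [inner_sum]
    simp only [inner_sum, adjoint_inner_right]
    simp only [← inner_sum]
    rw [← sum_inner]
    exact (inner_self_eq_norm_sq (𝕜 := ℂ) _).symm
    simp only [innerSL_apply_apply, Complex.reCLM_apply]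
  have part1 : ∀ x : X, G x = 0 ↔ ∀ v : List (Fin d), C (wordProd A v x) = 0 := by
    intro x
    constructor
    · intro h v
      have h0 : HasSum (fun v : List (Fin d) => ‖C (wordProd A v x)‖ ^ 2) 0 := by
        have := hGnorm x
        rw [h] at this
        simpa using this
      have hz := (hasSum_zero_iff_of_nonneg (fun v => by positivity)).mp h0
      have hv := congrFun hz v
      have := (pow_eq_zero_iff two_ne_zero).mp hv
      simpa using this
    · intro h
      have h0 : HasSum
          (fun v : List (Fin d) => adjoint (wordProd A v) ((adjoint C) (C (wordProd A v x))))
          0 := by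
        have heq : (fun v : List (Fin d) =>
            adjoint (wordProd A v) ((adjoint C) (C (wordProd A v x)))) = fun _ => 0 := by
          funext v
          rw [h v]
          simp
        rw [heq]
        exact hasSum_zero
      exact (hG x).unique h0
  have part2 : ∀ x : X, G x = 0 → ∀ j, G (A j x) = 0 := by
    intro x hx j
    rw [part1] at hx ⊢
    intro v
    rw [← wordProd_concat']
    exact hx _
  have part3 : ∀ x : X, G x = 0 → Ga x = 0 := by
    intro x hx
    rw [part1 x] at hx
    have h0 : HasSum (fun n : Fin d → ℕ =>
        wt n • ∑ v ∈ abWords n, ∑ u ∈ abWords n,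
          adjoint (funProd A v) ((adjoint C) (C (funProd A u x)))) 0 := by
      have heq : (fun n : Fin d → ℕ =>
          wt n • ∑ v ∈ abWords n, ∑ u ∈ abWords n,
            adjoint (funProd A v) ((adjoint C) (C (funProd A u x)))) = fun _ => 0 := by
        funext n
        have : ∀ u ∈ abWords n, ∀ v ∈ abWords n,
            adjoint (funProd A v) ((adjoint C) (C (funProd A u x))) = 0 := by
          intro u _ v _
          rw [show funProd A u = wordProd A (List.ofFn u) from rfl, hx (List.ofFn u)]
          simp
        rw [Finset.sum_congr rfl fun v hv => Finset.sum_congr rfl fun u hu => this u hu v hv]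
        simp
      rw [heq]
      exact hasSum_zero
    exact (hGa x).unique h0
  have keyC : ∀ y : X, Ga y = 0 → C y = 0 := by
    intro y hy
    have h0 : HasSum
        (fun n : Fin d → ℕ => wt n * ‖∑ v ∈ abWords n, C (funProd A v y)‖ ^ 2) 0 := by
      have := hGanorm y
      rw [hy] at this
      simpa using this
    have hall := (hasSum_zero_iff_of_nonneg
      (fun n => mul_nonneg (wt_pos' n).le (by positivity))).mp h0
    have hn := congrFun hall (fun _ : Fin d => 0)
    have hS : ∑ v ∈ abWords (fun _ : Fin d => 0), C (funProd A v y) = 0 := by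
      rcases mul_eq_zero.mp hn with h | h
      · exact absurd h (ne_of_gt (wt_pos' _))
      · have := (pow_eq_zero_iff two_ne_zero).mp h
        simpa using this
    rwa [abWords_zero_sum'] at hS
  refine ⟨part1, part2, part3, ?_⟩
  constructor
  · intro hinv x
    constructor
    · intro hx
      rw [part1]
      have hall : ∀ v : List (Fin d), Ga (wordProd A v x) = 0 := by
        intro v
        induction v with
        | nil => simpa [wordProd_nil'] using hx
        | cons j v ih =>
          rw [wordProd_cons']
          exact hinv j _ ih
      exact fun v => keyC _ (hall v)
    · exact part3 x
  · intro hiff j x hx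
    exact (hiff _).mpr (part2 x ((hiff x).mp hx) j)

end
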